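/- Let λ : V → ℝ be logits on a finite vocabulary V with |V| ≥ 2, let (U_v) be i.i.d. standard Gumbel variables, and let X = argmax_v (λ(v) + U_v). Condition on the observation X = x. Then for any alternative logits λ' : V → ℝ, the counterfactual probability P(argmax_v (λ'(v) + U_v) = x | X = x) is at least the interventional probability P(argmax_v (λ'(v) + U_v) = x), i.e., the Gumbel-max counterfactual never decreases the probability of the observed token. -/

import Mathlib

open MeasureTheory Set Filter Real
open scoped ENNReal

/-- The standard Gumbel measure on ℝ, with density exp(−u − exp(−u)). -/
noncomputable def gumbelMeasure : Measure ℝ :=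
  volume.withDensity fun u => ENNReal.ofReal (Real.exp (-u - Real.exp (-u)))

lemma lintegral_subst {f f' : ℝ → ℝ} (hf' : ∀ x, HasDerivAt f (f' x) x)
    (hf : Function.Injective f) (g : ℝ → ℝ≥0∞) :
    ∫⁻ x in Set.range f, g x = ∫⁻ x, ENNReal.ofReal |f' x| * g (f x) := by
  rw [← Set.image_univ]
  simpa only [ContinuousLinearMap.det_toSpanSingleton, Measure.restrict_univ] using
    lintegral_image_eq_lintegral_abs_det_fderiv_mul volume MeasurableSet.univ
      (fun x _ => (hf' x).hasFDerivAt.hasFDerivWithinAt) (hf.injOn) g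

lemma gumbel_total : (∫⁻ u, ENNReal.ofReal (Real.exp (-u - Real.exp (-u)))) = 1 := by
  have hd : ∀ x : ℝ, HasDerivAt (fun u => Real.exp (-u)) (-Real.exp (-x)) x := by
    intro x
    simpa using ((hasDerivAt_neg x).exp)
  have hinj : Function.Injective fun u : ℝ => Real.exp (-u) :=
    fun a b h => by
      have := Real.exp_injective h; linarith [neg_injective this]
  have hsub := lintegral_subst hd hinj (fun t => ENNReal.ofReal (Real.exp (-t)))
  have hrange : Set.range (fun u : ℝ => Real.exp (-u)) = Set.Ioi 0 := by
    rw [show (fun u : ℝ => Real.exp (-u)) = Real.exp ∘ Neg.neg from rfl,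
      Set.range_comp, neg_surjective.range_eq, Set.image_univ, Real.range_exp]
  rw [hrange] at hsub
  have hL : (∫⁻ x in Set.Ioi (0:ℝ), ENNReal.ofReal (Real.exp (-x))) = 1 := by
    rw [← ofReal_integral_eq_lintegral_ofReal]
    · rw [integral_exp_neg_Ioi_zero, ENNReal.ofReal_one]
    · exact (by simpa using exp_neg_integrableOn_Ioi 0 (one_pos) :
        IntegrableOn (fun x : ℝ => Real.exp (-x)) (Set.Ioi 0))
    · filter_upwards with x using (Real.exp_pos _).le
  rw [hL] at hsub
  rw [eq_comm] at hsub
  rw [← hsub]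
  apply lintegral_congr
  intro x
  rw [abs_of_nonpos (neg_nonpos.mpr (Real.exp_pos _).le), neg_neg,
    ← ENNReal.ofReal_mul (Real.exp_pos _).le, ← Real.exp_add]
  ring_nf

instance : IsProbabilityMeasure gumbelMeasure := by
  constructor
  rw [gumbelMeasure, withDensity_apply _ MeasurableSet.univ, Measure.restrict_univ,
    gumbel_total]

/-- rearrangement inequality for two pairs in `ℝ≥0∞`. -/
lemma rearr {a b c d : ℝ≥0∞} (hab : a ≤ b) (hcd : c ≤ d) :
    a * d + b * c ≤ a * c + b * d := by
  obtain ⟨e, rfl⟩ : ∃ e, d = c + e := ⟨d - c, (add_tsub_cancel_of_le hcd).symm⟩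
  rw [mul_add, mul_add]
  calc a * c + a * e + b * c = a * c + b * c + a * e := by ring
    _ ≤ a * c + b * c + b * e := by gcongr
    _ = a * c + (b * c + b * e) := by ring

/-- Harris / Chebyshev correlation inequality for two monotone functions on ℝ. -/
lemma harris (μ : Measure ℝ) [IsProbabilityMeasure μ] {f g : ℝ → ℝ≥0∞}
    (hf : Monotone f) (hg : Monotone g) :
    (∫⁻ t, f t ∂μ) * ∫⁻ t, g t ∂μ ≤ ∫⁻ t, f t * g t ∂μ := by
  have hfm : Measurable f := hf.measurable
  have hgm : Measurable g := hg.measurable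
  have key : ∀ s t : ℝ, f s * g t + f t * g s ≤ f s * g s + f t * g t := by
    intro s t
    rcases le_total s t with h | h
    · exact rearr (hf h) (hg h)
    · have := rearr (hf h) (hg h)
      calc f s * g t + f t * g s = f t * g s + f s * g t := by ring
        _ ≤ f t * g t + f s * g s := this
        _ = f s * g s + f t * g t := by ring
  have h2 : ∫⁻ s, ∫⁻ t, (f s * g t + f t * g s) ∂μ ∂μ
      ≤ ∫⁻ s, ∫⁻ t, (f s * g s + f t * g t) ∂μ ∂μ :=
    lintegral_mono fun s => lintegral_mono fun t => key s t
  have hL : ∫⁻ s, ∫⁻ t, (f s * g t + f t * g s) ∂μ ∂μ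
      = (∫⁻ t, f t ∂μ) * (∫⁻ t, g t ∂μ) + (∫⁻ t, f t ∂μ) * (∫⁻ t, g t ∂μ) := by
    have h1 : ∀ s : ℝ, ∫⁻ t, (f s * g t + f t * g s) ∂μ
        = f s * (∫⁻ t, g t ∂μ) + (∫⁻ t, f t ∂μ) * g s := by
      intro s
      rw [lintegral_add_left (hgm.const_mul _), lintegral_const_mul _ hgm,
        lintegral_mul_const _ hfm]
    simp_rw [h1]
    rw [lintegral_add_left (hfm.mul_const _), lintegral_mul_const _ hfm,
      lintegral_const_mul _ hgm]
  have hR : ∫⁻ s, ∫⁻ t, (f s * g s + f t * g t) ∂μ ∂μ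
      = (∫⁻ t, f t * g t ∂μ) + ∫⁻ t, f t * g t ∂μ := by
    have h1 : ∀ s : ℝ, ∫⁻ t, (f s * g s + f t * g t) ∂μ
        = f s * g s + ∫⁻ t, f t * g t ∂μ := by
      intro s
      rw [lintegral_add_left measurable_const, lintegral_const, measure_univ, mul_one]
    simp_rw [h1]
    rw [lintegral_add_right _ measurable_const, lintegral_const, measure_univ, mul_one]
  rw [hL, hR] at h2
  rw [← two_mul, ← two_mul] at h2
  exact (ENNReal.mul_le_mul_iff_right two_ne_zero ENNReal.ofNat_ne_top).mp h2

lemma gumbel_pi_event {V : Type*} [Fintype V] [DecidableEq V] (x : V) (c : V → ℝ) :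
    Measure.pi (fun _ : V => gumbelMeasure) {u : V → ℝ | ∀ v, v ≠ x → u v < u x + c v}
      = ∫⁻ t, ∏ w : {v : V // ¬ v = x}, gumbelMeasure (Set.Iio (t + c w.1))
          ∂gumbelMeasure := by
  classical
  letI : Unique {v : V // v = x} := ⟨⟨⟨x, rfl⟩⟩, fun a => Subtype.ext a.2⟩
  have hmp := measurePreserving_piEquivPiSubtypeProd (fun _ : V => gumbelMeasure)
    (fun v => v = x)
  set e := MeasurableEquiv.piEquivPiSubtypeProd (fun _ : V => ℝ) (fun v => v = x) with he
  set T : Set (({v : V // v = x} → ℝ) × ({v : V // ¬ v = x} → ℝ)) :=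
    {p | ∀ w : {v : V // ¬ v = x}, p.2 w < p.1 ⟨x, rfl⟩ + c w.1} with hT
  have hTmeas : MeasurableSet T := by
    have : T = ⋂ w : {v : V // ¬ v = x},
        {p : ({v : V // v = x} → ℝ) × ({v : V // ¬ v = x} → ℝ) |
          p.2 w < p.1 ⟨x, rfl⟩ + c w.1} := by
      ext p; simp [hT]
    rw [this]
    refine MeasurableSet.iInter fun w => measurableSet_lt ?_ ?_
    · exact (measurable_pi_apply w).comp measurable_snd
    · exact ((measurable_pi_apply _).comp measurable_fst).add_const _
  have hpre : e ⁻¹' T = {u : V → ℝ | ∀ v, v ≠ x → u v < u x + c v} := by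
    ext u
    constructor
    · intro h v hv
      exact h ⟨v, hv⟩
    · intro h w
      exact h w.1 w.2
  rw [← hpre, hmp.measure_preimage hTmeas.nullMeasurableSet,
    Measure.prod_apply hTmeas]
  have hslice : ∀ a : {v : V // v = x} → ℝ,
      (Measure.pi fun _ : {v : V // ¬ v = x} => gumbelMeasure) (Prod.mk a ⁻¹' T)
        = ∏ w : {v : V // ¬ v = x}, gumbelMeasure (Set.Iio (a ⟨x, rfl⟩ + c w.1)) := by
    intro a
    have : Prod.mk a ⁻¹' T
        = Set.pi Set.univ fun w : {v : V // ¬ v = x} => Set.Iio (a ⟨x, rfl⟩ + c w.1) := by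
      ext b
      simp [hT, Set.mem_pi]
    rw [this, Measure.pi_pi]
  simp_rw [hslice]
  have hmeas : Measurable fun t : ℝ =>
      ∏ w : {v : V // ¬ v = x}, gumbelMeasure (Set.Iio (t + c w.1)) := by
    refine Finset.measurable_prod _ fun w _ => ?_
    have : Monotone fun t : ℝ => gumbelMeasure (Set.Iio (t + c w.1)) :=
      fun s t hst => measure_mono (Set.Iio_subset_Iio (by linarith))
    exact this.measurable
  have := (measurePreserving_funUnique gumbelMeasure {v : V // v = x}).lintegral_comp hmeas
  convert this using 3
  rfl

/-- Gumbel-max counterfactuals never decrease the probability of the observed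
token: conditioning on the factual outcome X = x (logits λ) makes the event
that the counterfactual logits λ' also select x at least as likely as it is
interventionally. -/
theorem gumbel_max_counterfactual_bias
    {V : Type*} [Fintype V] (l l' : V → ℝ) (x : V)
    (hcard : 2 ≤ Fintype.card V)
    (hpos : Measure.pi (fun _ : V => gumbelMeasure)
        {u : V → ℝ | ∀ v, v ≠ x → l v + u v < l x + u x} ≠ 0) :
    Measure.pi (fun _ : V => gumbelMeasure)
        ({u : V → ℝ | ∀ v, v ≠ x → l' v + u v < l' x + u x} ∩
         {u : V → ℝ | ∀ v, v ≠ x → l v + u v < l x + u x}) /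
      Measure.pi (fun _ : V => gumbelMeasure)
        {u : V → ℝ | ∀ v, v ≠ x → l v + u v < l x + u x}
    ≥ Measure.pi (fun _ : V => gumbelMeasure)
        {u : V → ℝ | ∀ v, v ≠ x → l' v + u v < l' x + u x} := by
  classical
  set μ := gumbelMeasure with hμ
  set P := Measure.pi (fun _ : V => gumbelMeasure) with hP
  set a : V → ℝ := fun v => l' x - l' v with ha
  set b : V → ℝ := fun v => l x - l v with hb
  have hA : {u : V → ℝ | ∀ v, v ≠ x → l' v + u v < l' x + u x}
      = {u : V → ℝ | ∀ v, v ≠ x → u v < u x + a v} := by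
    ext u; constructor <;> intro h v hv <;> have := h v hv <;> simp [ha] at * <;> linarith
  have hB : {u : V → ℝ | ∀ v, v ≠ x → l v + u v < l x + u x}
      = {u : V → ℝ | ∀ v, v ≠ x → u v < u x + b v} := by
    ext u; constructor <;> intro h v hv <;> have := h v hv <;> simp [hb] at * <;> linarith
  have hAB : {u : V → ℝ | ∀ v, v ≠ x → u v < u x + a v} ∩
      {u : V → ℝ | ∀ v, v ≠ x → u v < u x + b v}
      = {u : V → ℝ | ∀ v, v ≠ x → u v < u x + min (a v) (b v)} := by
    ext u
    simp only [Set.mem_inter_iff, Set.mem_setOf_eq]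
    constructor
    · rintro ⟨h1, h2⟩ v hv
      rcases min_cases (a v) (b v) with ⟨h, _⟩ | ⟨h, _⟩ <;> rw [h]
      exacts [h1 v hv, h2 v hv]
    · intro h
      exact ⟨fun v hv => lt_of_lt_of_le (h v hv) (add_le_add_right (min_le_left _ _) _),
        fun v hv => lt_of_lt_of_le (h v hv) (add_le_add_right (min_le_right _ _) _)⟩
  rw [hB] at hpos
  rw [hA, hB, hAB]
  have hmono : ∀ c : V → ℝ, Monotone fun t : ℝ =>
      ∏ w : {v : V // ¬ v = x}, gumbelMeasure (Set.Iio (t + c w.1)) := by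
    intro c s t hst
    exact Finset.prod_le_prod' fun w _ =>
      measure_mono (Set.Iio_subset_Iio (by linarith))
  have hEa := gumbel_pi_event x a
  have hEb := gumbel_pi_event x b
  have hEm := gumbel_pi_event x fun v => min (a v) (b v)
  have hpt : ∀ t : ℝ,
      (∏ w : {v : V // ¬ v = x}, gumbelMeasure (Set.Iio (t + a w.1))) *
        ∏ w : {v : V // ¬ v = x}, gumbelMeasure (Set.Iio (t + b w.1))
      ≤ ∏ w : {v : V // ¬ v = x}, gumbelMeasure (Set.Iio (t + min (a w.1) (b w.1))) := by
    intro t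
    rw [← Finset.prod_mul_distrib]
    refine Finset.prod_le_prod' fun w _ => ?_
    rcases min_cases (a w.1) (b w.1) with ⟨h, _⟩ | ⟨h, _⟩ <;> rw [h]
    · calc gumbelMeasure (Set.Iio (t + a w.1)) * gumbelMeasure (Set.Iio (t + b w.1))
          ≤ gumbelMeasure (Set.Iio (t + a w.1)) * 1 := by
            gcongr; exact prob_le_one
        _ = _ := mul_one _
    · calc gumbelMeasure (Set.Iio (t + a w.1)) * gumbelMeasure (Set.Iio (t + b w.1))
          ≤ 1 * gumbelMeasure (Set.Iio (t + b w.1)) := by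
            gcongr; exact prob_le_one
        _ = _ := one_mul _
  rw [ge_iff_le, ENNReal.le_div_iff_mul_le (Or.inl hpos) (Or.inl (measure_ne_top _ _))]
  calc Measure.pi (fun _ : V => gumbelMeasure) {u : V → ℝ | ∀ v, v ≠ x → u v < u x + a v} *
        Measure.pi (fun _ : V => gumbelMeasure) {u : V → ℝ | ∀ v, v ≠ x → u v < u x + b v}
      = (∫⁻ t, ∏ w : {v : V // ¬ v = x}, gumbelMeasure (Set.Iio (t + a w.1)) ∂gumbelMeasure) *
        ∫⁻ t, ∏ w : {v : V // ¬ v = x}, gumbelMeasure (Set.Iio (t + b w.1)) ∂gumbelMeasure := by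
        rw [hEa, hEb]
    _ ≤ ∫⁻ t, (∏ w : {v : V // ¬ v = x}, gumbelMeasure (Set.Iio (t + a w.1))) *
          ∏ w : {v : V // ¬ v = x}, gumbelMeasure (Set.Iio (t + b w.1)) ∂gumbelMeasure :=
        harris gumbelMeasure (hmono a) (hmono b)
    _ ≤ ∫⁻ t, ∏ w : {v : V // ¬ v = x},
          gumbelMeasure (Set.Iio (t + min (a w.1) (b w.1))) ∂gumbelMeasure :=
        lintegral_mono hpt
    _ = _ := hEm.symm
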